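/- For the Petersen graph P, the all-ones vector does not belong to the perfect matching lattice Lat(P); consequently l(P) = +∞. -/

import Mathlib

open Finset
open scoped Classical

/-- A perfect matching of `G`, given as a finite set of edges: every vertex lies on
exactly one edge of `M`. -/
def IsPM {V : Type*} (G : SimpleGraph V) (M : Finset (Sym2 V)) : Prop :=
  (∀ e ∈ M, e ∈ G.edgeSet) ∧ ∀ v : V, (M.filter (fun e => v ∈ e)).card = 1

/-- The multigraph obtained from the cubic graph `G` by adding `m e` parallel copies of
each edge `e` is Class I with `c` colours; equivalently (since that multigraph is regular)
its edge multiset decomposes into `c` perfect matchings of `G`. -/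
def ClassIPlus {V : Type*} (G : SimpleGraph V) (m : Sym2 V → ℕ) (c : ℕ) : Prop :=
  ∃ F : Fin c → Finset (Sym2 V), (∀ i, IsPM G (F i)) ∧
    ∀ e ∈ G.edgeSet, (Finset.univ.filter (fun i => e ∈ F i)).card = 1 + m e

/-- The set of `k` for which some `k` perfect matchings added to `G` give a Class I
multigraph. -/
def lSet {V : Type*} (G : SimpleGraph V) : Set ℕ :=
  {k | ∃ M : Fin k → Finset (Sym2 V), (∀ i, IsPM G (M i)) ∧
    ClassIPlus G (fun e => (Finset.univ.filter (fun i => e ∈ M i)).card) (k + 3)}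

/-- `l(G)`: the minimum number of perfect matchings to add to `G` to get a Class I
multigraph (`⊤` if impossible). -/
noncomputable def lVal {V : Type*} (G : SimpleGraph V) : ℕ∞ :=
  sInf ((fun k : ℕ => (k : ℕ∞)) '' lSet G)

/-- The perfect matching index (excessive index) of `G`. -/
noncomputable def pmIndex {V : Type*} (G : SimpleGraph V) : ℕ∞ :=
  sInf ((fun k : ℕ => (k : ℕ∞)) '' {k | ∃ F : Fin k → Finset (Sym2 V),
    (∀ i, IsPM G (F i)) ∧ ∀ e ∈ G.edgeSet, ∃ i, e ∈ F i})

/-- `G` is cubic (3-regular). -/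
def IsCubic {V : Type*} [Fintype V] (G : SimpleGraph V) : Prop := ∀ v, G.degree v = 3

/-- `G` is bridgeless. -/
def IsBridgeless {V : Type*} (G : SimpleGraph V) : Prop := ∀ e ∈ G.edgeSet, ¬ G.IsBridge e

/-- The all-ones vector on `E(G)` lies in the perfect matching lattice of `G`:
there are perfect matchings `J 0, …, J (s-1)` and `N 0, …, N (t-1)` such that on every
edge the sum of the characteristic vectors of the `J i` minus the sum of the
characteristic vectors of the `N j` equals `1`. -/
def OnesInLat {V : Type*} (G : SimpleGraph V) : Prop :=
  ∃ (s t : ℕ) (J : Fin s → Finset (Sym2 V)) (N : Fin t → Finset (Sym2 V)),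
    (∀ i, IsPM G (J i)) ∧ (∀ j, IsPM G (N j)) ∧
    ∀ e ∈ G.edgeSet,
      ((Finset.univ.filter (fun i => e ∈ J i)).card : ℤ)
        - ((Finset.univ.filter (fun j => e ∈ N j)).card : ℤ) = 1

/-- The vertices of the Petersen graph: 2-element subsets of a 5-element set. -/
def PetersenVert : Type := {s : Finset (Fin 5) // s.card = 2}

noncomputable instance : Fintype PetersenVert :=
  inferInstanceAs (Fintype {s : Finset (Fin 5) // s.card = 2})

/-- The Petersen graph, as the Kneser graph `K(5,2)`. -/
def petersen : SimpleGraph PetersenVert where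
  Adj a b := Disjoint a.1 b.1
  symm := ⟨fun a b h => h.symm⟩
  loopless := by
    constructor
    intro a h
    have h2 := a.2
    rw [disjoint_self] at h
    rw [h] at h2
    simp at h2

/-! ### Auxiliary setup for the Petersen graph -/

instance : DecidableEq PetersenVert :=
  inferInstanceAs (DecidableEq {s : Finset (Fin 5) // s.card = 2})

instance instFintypePV : Fintype PetersenVert :=
  inferInstanceAs (Fintype {s : Finset (Fin 5) // s.card = 2})

instance : DecidableRel petersen.Adj :=
  fun a b => inferInstanceAs (Decidable (Disjoint a.1 b.1))

/-- A vertex of the Petersen graph from two distinct labels. -/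
def pV (x y : Fin 5) (h : ({x, y} : Finset (Fin 5)).card = 2 := by decide) : PetersenVert :=
  ⟨{x, y}, h⟩

/-- Outer pentagon vertices. -/
def pa : Fin 5 → PetersenVert := ![pV 0 1, pV 2 3, pV 4 0, pV 1 2, pV 3 4]

/-- Inner (spoke-partner) vertices. -/
def pb : Fin 5 → PetersenVert := ![pV 2 4, pV 1 4, pV 1 3, pV 0 3, pV 0 2]

/-- The edges of the outer pentagon. -/
def pedge (i : Fin 5) : Sym2 PetersenVert := s(pa i, pa (i + 1))

/-- The pentagon, as an edge set. -/
def pent : Finset (Sym2 PetersenVert) := Finset.univ.image pedge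

lemma pent_card : pent.card = 5 := by decide

lemma pent_sub : ∀ e ∈ pent, e ∈ petersen.edgeSet := by decide

lemma nbr_a : ∀ i w, petersen.Adj (pa i) w → w = pa (i + 1) ∨ w = pa (i + 4) ∨ w = pb i := by
  decide

lemma nbr_b : ∀ i w, petersen.Adj (pb i) w → w = pb (i + 2) ∨ w = pb (i + 3) ∨ w = pa i := by
  decide

lemma pa_inj : ∀ i j : Fin 5, pa i = pa j → i = j := by decide

lemma pa_ne_pb : ∀ i j : Fin 5, pa i ≠ pb j := by decide

lemma pb_ne_pa : ∀ i j : Fin 5, pb i ≠ pa j := by decide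

lemma pb_inj : ∀ i j : Fin 5, pb i = pb j → i = j := by decide

lemma pedge_inj : Function.Injective pedge := by decide

lemma fin5_single : ∀ T : Finset (Fin 5), (∀ i ∈ T, i + 1 ∉ T) → Odd T.card →
    ∃ i, T = {i} := by decide

/-! ### Generic facts about perfect matchings -/

lemma filter_card_one_unique {α : Type*} {p : α → Prop} {inst : DecidablePred p}
    {s : Finset α} (h : (@Finset.filter α p inst s).card = 1) {e f : α}
    (he : e ∈ s) (hpe : p e) (hf : f ∈ s) (hpf : p f) : e = f := by
  rw [Finset.card_eq_one] at h
  obtain ⟨g, hg⟩ := h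
  have h1 : e ∈ @Finset.filter α p inst s := Finset.mem_filter.2 ⟨he, hpe⟩
  have h2 : f ∈ @Finset.filter α p inst s := Finset.mem_filter.2 ⟨hf, hpf⟩
  rw [hg, Finset.mem_singleton] at h1 h2
  rw [h1, h2]

lemma filter_card_one_exists {α : Type*} {p : α → Prop} {inst : DecidablePred p}
    {s : Finset α} (h : (@Finset.filter α p inst s).card = 1) : ∃ e ∈ s, p e := by
  rw [Finset.card_eq_one] at h
  obtain ⟨g, hg⟩ := h
  have h1 : g ∈ @Finset.filter α p inst s := by rw [hg]; exact Finset.mem_singleton_self g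
  exact ⟨g, (Finset.mem_filter.1 h1).1, (Finset.mem_filter.1 h1).2⟩

lemma pm_unique {M : Finset (Sym2 PetersenVert)} (hM : IsPM petersen M)
    {v : PetersenVert} {e f : Sym2 PetersenVert} (he : e ∈ M) (hve : v ∈ e)
    (hf : f ∈ M) (hvf : v ∈ f) : e = f :=
  filter_card_one_unique (hM.2 v) he hve hf hvf

lemma pm_exists {M : Finset (Sym2 PetersenVert)} (hM : IsPM petersen M) (v : PetersenVert) :
    ∃ w, petersen.Adj v w ∧ s(v, w) ∈ M := by
  obtain ⟨e, heM, hve⟩ := filter_card_one_exists (hM.2 v)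
  obtain ⟨w, rfl⟩ := Sym2.mem_iff_exists.1 hve
  exact ⟨w, petersen.mem_edgeSet.1 (hM.1 _ heM), heM⟩

/-- If `s(x,y), s(u,y) ∈ M` for a perfect matching `M`, then `x = u` or (`x = y` and `y = u`). -/
lemma shared_vtx {M : Finset (Sym2 PetersenVert)} (hM : IsPM petersen M)
    {x u y : PetersenVert} (h1 : s(x, y) ∈ M) (h2 : s(u, y) ∈ M) :
    x = u ∨ (x = y ∧ y = u) := by
  have hEq := pm_unique hM h1 (Sym2.mem_mk_right x y) h2 (Sym2.mem_mk_right u y)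
  rw [Sym2.eq_iff] at hEq
  rcases hEq with ⟨h, -⟩ | h
  · exact Or.inl h
  · exact Or.inr h

/-! ### The chase: a perfect matching cannot meet the pentagon in exactly one edge -/

lemma chase {M : Finset (Sym2 PetersenVert)} (hM : IsPM petersen M) (i : Fin 5)
    (hin : pedge i ∈ M) (hout : ∀ j, j ≠ i → pedge j ∉ M) : False := by
  have hin' : s(pa i, pa (i + 1)) ∈ M := hin
  -- Step 1: `pa (i+2)` is matched to `pb (i+2)`.
  obtain ⟨w, hadj, hw⟩ := pm_exists hM (pa (i + 2))
  rcases nbr_a (i + 2) w hadj with rfl | rfl | rfl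
  · exact hout (i + 2) ((by decide : ∀ i : Fin 5, i + 2 ≠ i) i) hw
  · rw [(by decide : ∀ i : Fin 5, i + 2 + 4 = i + 1) i] at hw
    rcases shared_vtx hM hw hin' with h | ⟨h, -⟩
    · exact (by decide : ∀ i : Fin 5, i + 2 ≠ i) i (pa_inj _ _ h)
    · exact (by decide : ∀ i : Fin 5, i + 2 ≠ i + 1) i (pa_inj _ _ h)
  have hw1 : s(pa (i + 2), pb (i + 2)) ∈ M := hw
  -- Step 2: `pa (i+3)` is matched to `pb (i+3)`.
  obtain ⟨w, hadj, hw⟩ := pm_exists hM (pa (i + 3))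
  rcases nbr_a (i + 3) w hadj with rfl | rfl | rfl
  · exact hout (i + 3) ((by decide : ∀ i : Fin 5, i + 3 ≠ i) i) hw
  · rw [(by decide : ∀ i : Fin 5, i + 3 + 4 = i + 2) i] at hw
    have hw1' : s(pb (i + 2), pa (i + 2)) ∈ M := by rwa [Sym2.eq_swap] at hw1
    rcases shared_vtx hM hw hw1' with h | ⟨h, -⟩
    · exact pa_ne_pb _ _ h
    · exact (by decide : ∀ i : Fin 5, i + 3 ≠ i + 2) i (pa_inj _ _ h)
  have hw2 : s(pa (i + 3), pb (i + 3)) ∈ M := hw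
  -- Step 3: `pa (i+4)` is matched to `pb (i+4)`.
  obtain ⟨w, hadj, hw⟩ := pm_exists hM (pa (i + 4))
  rcases nbr_a (i + 4) w hadj with rfl | rfl | rfl
  · exact hout (i + 4) ((by decide : ∀ i : Fin 5, i + 4 ≠ i) i) hw
  · rw [(by decide : ∀ i : Fin 5, i + 4 + 4 = i + 3) i] at hw
    have hw2' : s(pb (i + 3), pa (i + 3)) ∈ M := by rwa [Sym2.eq_swap] at hw2
    rcases shared_vtx hM hw hw2' with h | ⟨h, -⟩
    · exact pa_ne_pb _ _ h
    · exact (by decide : ∀ i : Fin 5, i + 4 ≠ i + 3) i (pa_inj _ _ h)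
  have hw3 : s(pa (i + 4), pb (i + 4)) ∈ M := hw
  -- Step 4: `pb i` has no available partner.
  obtain ⟨w, hadj, hw⟩ := pm_exists hM (pb i)
  rcases nbr_b i w hadj with rfl | rfl | rfl
  · have hw1' : s(pa (i + 2), pb (i + 2)) ∈ M := hw1
    rcases shared_vtx hM hw hw1' with h | ⟨-, h⟩
    · exact pb_ne_pa _ _ h
    · exact pb_ne_pa _ _ h
  · rcases shared_vtx hM hw hw2 with h | ⟨-, h⟩
    · exact pb_ne_pa _ _ h
    · exact pb_ne_pa _ _ h
  · have hin'' : s(pa (i + 1), pa i) ∈ M := by rwa [Sym2.eq_swap] at hin'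
    rcases shared_vtx hM hw hin'' with h | ⟨h, -⟩
    · exact pb_ne_pa _ _ h
    · exact pb_ne_pa _ _ h

/-! ### Every perfect matching meets the pentagon in an even number of edges -/

lemma pent_even {M : Finset (Sym2 PetersenVert)} (hM : IsPM petersen M) :
    Even ((pent ∩ M).card) := by
  by_contra hodd
  rw [Nat.not_even_iff_odd] at hodd
  have himg : pent ∩ M = (Finset.univ.filter (fun i => pedge i ∈ M)).image pedge := by
    ext e
    simp only [Finset.mem_inter, pent, Finset.mem_image, Finset.mem_filter, Finset.mem_univ,
      true_and]
    constructor
    · rintro ⟨⟨i, hi⟩, he⟩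
      exact ⟨i, hi ▸ he, hi⟩
    · rintro ⟨i, hi, rfl⟩
      exact ⟨⟨i, rfl⟩, hi⟩
  rw [himg, Finset.card_image_of_injective _ pedge_inj] at hodd
  have hadjfree : ∀ j ∈ Finset.univ.filter (fun i => pedge i ∈ M), j + 1 ∉
      Finset.univ.filter (fun i => pedge i ∈ M) := by
    intro j hj hj1
    rw [Finset.mem_filter] at hj hj1
    have h1 : s(pa j, pa (j + 1)) ∈ M := hj.2
    have h2 : s(pa (j + 1 + 1), pa (j + 1)) ∈ M := by
      have := hj1.2
      rwa [pedge, Sym2.eq_swap] at this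
    rcases shared_vtx hM h1 h2 with h | ⟨h, -⟩
    · exact (by decide : ∀ i : Fin 5, i ≠ i + 1 + 1) j (pa_inj _ _ h)
    · exact (by decide : ∀ i : Fin 5, i ≠ i + 1) j (pa_inj _ _ h)
  obtain ⟨i, hTi⟩ := fin5_single _ hadjfree hodd
  have hin : pedge i ∈ M := by
    have : i ∈ Finset.univ.filter (fun i => pedge i ∈ M) := by
      rw [hTi]; exact Finset.mem_singleton_self i
    exact (Finset.mem_filter.1 this).2
  have hout : ∀ j, j ≠ i → pedge j ∉ M := by
    intro j hj hjM
    have : j ∈ Finset.univ.filter (fun i => pedge i ∈ M) :=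
      Finset.mem_filter.2 ⟨Finset.mem_univ j, hjM⟩
    rw [hTi, Finset.mem_singleton] at this
    exact hj this
  exact chase hM i hin hout

/-! ### The parity argument -/

lemma even_part {k : ℕ} (F : Fin k → Finset (Sym2 PetersenVert))
    (hF : ∀ i, IsPM petersen (F i))
    {inst : ∀ e : Sym2 PetersenVert, DecidablePred (fun i : Fin k => e ∈ F i)} :
    Even (∑ e ∈ pent, ((@Finset.filter _ _ (inst e) Finset.univ).card : ℤ)) := by
  have step1 : ∑ e ∈ pent, ((@Finset.filter _ _ (inst e) Finset.univ).card : ℤ)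
      = ∑ i : Fin k, (((@Finset.filter _ _ (fun e => inst e i) pent)).card : ℤ) := by
    have l1 : ∀ e ∈ pent, ((@Finset.filter _ _ (inst e) Finset.univ).card : ℤ)
        = ∑ i : Fin k, (if e ∈ F i then (1 : ℤ) else 0) := by
      intro e _
      rw [Finset.card_filter]
      push_cast
      exact Finset.sum_congr rfl (fun i _ => by split <;> simp)
    rw [Finset.sum_congr rfl l1, Finset.sum_comm]
    refine Finset.sum_congr rfl (fun i _ => ?_)
    rw [Finset.card_filter]
    push_cast
    exact Finset.sum_congr rfl (fun e _ => by split <;> simp)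
  rw [step1, even_iff_two_dvd]
  refine Finset.dvd_sum (fun i _ => ?_)
  rw [← even_iff_two_dvd, Int.even_coe_nat]
  have : @Finset.filter _ _ (fun e => inst e i) pent = pent ∩ F i := by
    rw [Finset.filter_congr_decidable, Finset.filter_mem_eq_inter]
  rw [this]
  exact pent_even (hF i)

lemma not_ones : ¬ OnesInLat petersen := by
  rintro ⟨s, t, J, N, hJ, hN, h⟩
  have hsum := Finset.sum_congr rfl (fun e (he : e ∈ pent) => h e (pent_sub e he))
  rw [Finset.sum_const, Finset.sum_sub_distrib, pent_card] at hsum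
  obtain ⟨x, hx⟩ := even_part J hJ (inst := fun e a => @Finset.decidableMem (Sym2 PetersenVert)
    (fun a b => @Sym2.instDecidableEq PetersenVert
      (fun a b => Classical.propDecidable (a = b)) a b) e (J a))
  obtain ⟨y, hy⟩ := even_part N hN (inst := fun e a => @Finset.decidableMem (Sym2 PetersenVert)
    (fun a b => @Sym2.instDecidableEq PetersenVert
      (fun a b => Classical.propDecidable (a = b)) a b) e (N a))
  rw [hx, hy] at hsum
  simp only [nsmul_eq_mul, mul_one] at hsum
  omega

/-! ### Main theorem -/

theorem stmt3 : ¬ OnesInLat petersen ∧ lVal petersen = ⊤ := by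
  refine ⟨not_ones, ?_⟩
  have hempty : lSet petersen = ∅ := by
    ext k
    simp only [lSet, Set.mem_setOf_eq, Set.mem_empty_iff_false, iff_false]
    rintro ⟨M, hMpm, F, hFpm, hcount⟩
    refine not_ones ⟨k + 3, k, F, M, hFpm, hMpm, fun e he => ?_⟩
    have h1 := hcount e he
    rw [h1]
    push_cast
    ring
  rw [lVal, hempty]
  simp
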